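/- Let n be a positive integer with prime factorization n = ∏_{i=1}^{s} p_i^{k_i}, let t and x be positive integers, and let 1 ≤ j ≤ s. Then (σ_x(n)+t)/n^x < I(x, p_j·n) if and only if p_j^x < (1/t)·σ_x(n/p_j^{k_j}). -/
import Mathlib


open Finset Nat

/-- Sum of x-th powers of divisors. -/
def sigmaX (x n : ℕ) : ℕ := ∑ d ∈ n.divisors, d ^ x

/-- The x-th abundancy index as a rational number. -/
def Iq (x n : ℕ) : ℚ := (sigmaX x n : ℚ) / (n : ℚ) ^ x

lemma sigmaX_eq (x n : ℕ) : sigmaX x n = ArithmeticFunction.sigma x n := by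
  rw [ArithmeticFunction.sigma_apply]; rfl

lemma sigmaX_mul (x : ℕ) {a b : ℕ} (h : a.Coprime b) :
    sigmaX x (a * b) = sigmaX x a * sigmaX x b := by
  simp only [sigmaX_eq]
  exact ArithmeticFunction.isMultiplicative_sigma.map_mul_of_coprime h

lemma sigmaX_prime_pow (x : ℕ) {q : ℕ} (hq : q.Prime) (a : ℕ) :
    sigmaX x (q ^ a) = ∑ i ∈ Finset.range (a + 1), (q ^ x) ^ i := by
  rw [sigmaX_eq, ArithmeticFunction.sigma_apply_prime_pow hq]
  exact Finset.sum_congr rfl fun i _ => by rw [← pow_mul, Nat.mul_comm]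

theorem stmt_10 (x t s : ℕ) (hx : 0 < x) (ht : 0 < t) (hs : 0 < s)
    (p : Fin s → ℕ) (k : Fin s → ℕ)
    (hp : ∀ i, (p i).Prime) (hinj : Function.Injective p) (hk : ∀ i, 0 < k i)
    (n : ℕ) (hn : n = ∏ i, p i ^ k i) (j : Fin s) :
    ((sigmaX x n + t : ℚ) / (n : ℚ) ^ x < Iq x (p j * n)) ↔
    ((p j : ℚ) ^ x < (1 / (t : ℚ)) * (sigmaX x (n / p j ^ k j) : ℚ)) := by
  set q := p j with hq
  set K := k j with hK
  set m : ℕ := ∏ i ∈ Finset.univ.erase j, p i ^ k i with hm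
  have hqp : q.Prime := hp j
  have hnm : n = q ^ K * m := by
    rw [hn, hm, ← Finset.mul_prod_erase _ _ (Finset.mem_univ j)]
  have hcop : q.Coprime m := by
    apply Nat.Coprime.prod_right
    intro i hi
    have hne : p i ≠ q := fun h => (Finset.mem_erase.mp hi).1 (hinj h)
    exact (Nat.Coprime.pow_right _ ((Nat.coprime_primes hqp (hp i)).mpr hne.symm))
  have hdiv : n / q ^ K = m := by
    rw [hnm, Nat.mul_div_cancel_left _ (pow_pos hqp.pos K)]
  have hmpos : 0 < m := Finset.prod_pos fun i _ => pow_pos (hp i).pos _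
  have hnpos : 0 < n := by rw [hnm]; exact Nat.mul_pos (pow_pos hqp.pos K) hmpos
  -- sigma computations
  have hσn : sigmaX x n = sigmaX x (q ^ K) * sigmaX x m := by
    rw [hnm, sigmaX_mul x ((hcop.pow_left K))]
  have hσqn : sigmaX x (q * n) = sigmaX x (q ^ (K + 1)) * sigmaX x m := by
    rw [hnm, ← mul_assoc, ← _root_.pow_succ', sigmaX_mul x ((hcop.pow_left (K+1)))]
  have hstep : sigmaX x (q ^ (K + 1)) = q ^ x * sigmaX x (q ^ K) + 1 := by
    rw [sigmaX_prime_pow x hqp, sigmaX_prime_pow x hqp, Finset.sum_range_succ',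
      Finset.mul_sum]
    simp [_root_.pow_succ']
  have hkey : sigmaX x (q * n) = q ^ x * sigmaX x n + sigmaX x m := by
    rw [hσqn, hstep, hσn]; ring
  -- positivity in ℚ
  have hNpos : (0:ℚ) < (n : ℚ) ^ x := by positivity
  have hqx : (0:ℚ) < (q : ℚ) ^ x := by
    have := hqp.pos; positivity
  have htq : (0:ℚ) < (t : ℚ) := by exact_mod_cast ht
  rw [hdiv]
  have hcast : (Iq x (q * n)) =
      ((q:ℚ) ^ x * (sigmaX x n : ℚ) + (sigmaX x m : ℚ)) / ((q:ℚ) ^ x * (n:ℚ) ^ x) := by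
    rw [Iq, hkey]
    push_cast
    rw [mul_pow]
  rw [hcast, div_lt_div_iff₀ hNpos (mul_pos hqx hNpos), one_div, inv_mul_eq_div,
    lt_div_iff₀ htq]
  constructor <;> intro h <;> nlinarith [hNpos, hqx]
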